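/- arXiv:1610.02640 — 2 statements merged into one kernel-verified Lean document; each statement's English description precedes it below -/
import Mathlib

section
/- For a two-columned skew shape λ(a,b,c) = (2^{b+c}, 1^a)/(1^b) and a semistandard tableau T of shape λ(a,b,c) over a linearly ordered alphabet with r_T = 0 (i.e., the right column cannot be slid down even one position while keeping semistandardness), the operators 𝓔 (jeu de taquin sliding into the position below the bottom of the right column) and 𝓕 (jeu de taquin sliding into the position above the top of the left column) satisfy: 𝓔T and 𝓕T again have r = 0 whenever they are defined, and the set {𝓔^k T : 0 ≤ k ≤ a} ∪ {𝓕^l T : 0 ≤ l ≤ b} forms a regular sl_2-crystal with respect to 𝓔 and 𝓕. -/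
/-!
Statement 2: for a semistandard tableau `T` of the two-columned skew shape
`λ(a,b,c) = (2^{b+c},1^a)/(1^b)` with `r_T = 0`, the jeu de taquin operators `𝓔`, `𝓕`
again produce tableaux with `r = 0`, and `{𝓔^k T : k ≤ a} ∪ {𝓕^l T : l ≤ b}` forms a
regular `sl₂`-crystal (a single string of length `a+b` on which `𝓔` and `𝓕` are mutually
inverse raising/lowering operators).

A tableau is encoded as `(b, L, R) : ℕ × List ℕ × List ℕ` (`L`, `R` the left and right
columns written top-to-bottom, entries in a linearly ordered alphabet encoded in `ℕ`,
`L.length = c + a`, `R.length = b + c`).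
-/

namespace KN

/-- The `i`-th entry from the bottom (1-indexed) of a column written top-to-bottom. -/
def getB (l : List ℕ) (i : ℕ) : Option ℕ :=
  if 1 ≤ i ∧ i ≤ l.length then l[l.length - i]? else none

/-- Semistandardness of a two-column skew tableau of shape `λ(a,b,c)` with left column `L`
(of length `c+a`), right column `R` (of length `b+c`), both written top-to-bottom:
columns strictly increase and, in each of the `c` overlapping rows, the left entry is
no greater than the right entry. -/
def PairSSD (b : ℕ) (L R : List ℕ) : Prop :=
  L.Chain' (· < ·) ∧ R.Chain' (· < ·) ∧
    ∀ i x y, L[i]? = some x → R[b + i]? = some y → x ≤ y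

/-- `r_T = 0`: the right column of `T` cannot be slid down one position while keeping
semistandardness (automatic when `a = 0` or `b = 0`). -/
def SlideZero (a b : ℕ) (L R : List ℕ) : Prop :=
  a = 0 ∨ b = 0 ∨ ∃ i x y, L[i]? = some x ∧ R[b + i - 1]? = some y ∧ y < x

/-- State of a two-column skew tableau: `(b, L, R)` where `b` is the shape parameter
(length of the empty upper part of the left column). -/
abbrev TC := ℕ × List ℕ × List ℕ

def FCond (b : ℕ) (L R : List ℕ) (i : ℕ) : Bool :=
  match L[i]?, R[b - 1 + i]? with
  | _, none => false
  | none, some _ => true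
  | some x, some y => decide (y < x)

/-- The jeu de taquin operator `𝓕`: slide into the position above the top of the left
column; the result has shape `λ(a+1, b−1, c)`. -/
def Fop : TC → Option TC := fun t =>
  let b := t.1; let L := t.2.1; let R := t.2.2
  if b = 0 then none else
    match (List.range (L.length + 1)).find? (fun i => FCond b L R i) with
    | none => none
    | some i =>
        match R[b - 1 + i]? with
        | some y => some (b - 1, L.take i ++ y :: L.drop i, R.eraseIdx (b - 1 + i))
        | none => none

def ECond (b : ℕ) (L R : List ℕ) (i : ℕ) : Bool :=
  match L[i]? with
  | none => false
  | some x =>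
      if b + i = 0 then true
      else match R[b + i - 1]? with
        | none => true
        | some y => decide (y < x)

/-- The jeu de taquin operator `𝓔`: slide into the position below the bottom of the right
column; the result has shape `λ(a−1, b+1, c)`. -/
def Eop : TC → Option TC := fun t =>
  let b := t.1; let L := t.2.1; let R := t.2.2
  if L.length + b ≤ R.length then none else
    match ((List.range (R.length - b + 1)).reverse).find? (fun i => ECond b L R i) with
    | none => none
    | some i =>
        match L[i]? with
        | some x => some (b + 1, L.eraseIdx i, R.insertIdx (b + i) x)
        | none => none

/-- Iteration of a partial operator. -/
def iterO {α : Type} (g : α → Option α) : ℕ → α → Option α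
  | 0, t => some t
  | k + 1, t => (g t).bind (iterO g k)

/-- Bounded boolean test of two-column semistandardness (overlap part only). -/
def ssdB (b : ℕ) (U V : List ℕ) : Bool :=
  (List.range U.length).all fun i =>
    match U[i]?, V[b + i]? with
    | some x, some y => decide (x ≤ y)
    | _, _ => true

/-- The canonical offset of a pair of columns `(U, V)` (`U` left, `V` right): the least `b`
such that the two-column arrangement with offset `b` is semistandard; this realizes `(U,V)`
as the two-column tableau `T` with `(T^L, T^R) = (U, V)` and `r_T = 0`. -/
def pairOffset (U V : List ℕ) : ℕ :=
  match (List.range (V.length + 1)).find? (fun b =>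
      decide (V.length ≤ U.length + b) && ssdB b U V) with
  | some b => b
  | none => V.length

/-- `𝓕` on a pair of single columns. -/
def pairF (U V : List ℕ) : Option (List ℕ × List ℕ) :=
  (Fop (pairOffset U V, U, V)).map fun t => (t.2.1, t.2.2)

/-- `𝓔` on a pair of single columns. -/
def pairE (U V : List ℕ) : Option (List ℕ × List ℕ) :=
  (Eop (pairOffset U V, U, V)).map fun t => (t.2.1, t.2.2)

/-- `𝓕_i` on a tuple of columns (components listed right-to-left, 0-based index `k = i−1`):
apply `𝓕` to the pair formed by components `k+1` (left) and `k` (right). -/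
def FiOp (k : ℕ) (us : List (List ℕ)) : Option (List (List ℕ)) :=
  match us[k]?, us[k+1]? with
  | some V, some U => (pairF U V).map fun p => (us.set (k+1) p.1).set k p.2
  | _, _ => none

/-- `𝓔_i` on a tuple of columns. -/
def EiOp (k : ℕ) (us : List (List ℕ)) : Option (List (List ℕ)) :=
  match us[k]?, us[k+1]? with
  | some V, some U => (pairE U V).map fun p => (us.set (k+1) p.1).set k p.2
  | _, _ => none


lemma find?_range_min {p : ℕ → Bool} {n i : ℕ} (hi : i < n) (hp : p i = true)
    (hmin : ∀ j, j < i → p j ≠ true) : (List.range n).find? p = some i := by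
  induction n with
  | zero => omega
  | succ n ih =>
    rw [List.range_succ, List.find?_append]
    rcases Nat.lt_or_ge i n with h | h
    · rw [ih h]; rfl
    · have hin : i = n := by omega
      subst hin
      have hnone : (List.range i).find? p = none := by
        rw [List.find?_eq_none]
        intro x hx
        exact hmin x (List.mem_range.1 hx)
      rw [hnone]
      simp [List.find?, hp]

lemma find?_range_rev_max {p : ℕ → Bool} {n i : ℕ} (hi : i < n) (hp : p i = true)
    (hmax : ∀ j, i < j → j < n → p j ≠ true) : (List.range n).reverse.find? p = some i := by
  induction n with
  | zero => omega
  | succ n ih =>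
    rw [List.range_succ, List.reverse_append]
    simp only [List.reverse_singleton, List.singleton_append, List.find?_cons]
    rcases Nat.lt_or_ge i n with h | h
    · have hn : p n = false := by
        have := hmax n h (Nat.lt_succ_self n)
        simpa using this
      rw [hn]
      exact ih h (fun j hj1 hj2 => hmax j hj1 (Nat.lt_succ_of_lt hj2))
    · have hin : i = n := by omega
      subst hin
      rw [hp]

lemma getElem?_eraseIdx' {α} {l : List α} {i : ℕ} (hi : i < l.length) (j : ℕ) :
    (l.eraseIdx i)[j]? = if j < i then l[j]? else l[j+1]? := by
  have hlen : (l.eraseIdx i).length = l.length - 1 := by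
    rw [List.length_eraseIdx]; simp [hi]
  rcases Nat.lt_or_ge j i with h | h
  · rw [if_pos h]
    by_cases hj : j < (l.eraseIdx i).length
    · rw [List.getElem?_eq_getElem hj, List.getElem_eraseIdx, dif_pos h,
        List.getElem?_eq_getElem (by omega)]
    · exfalso; omega
  · rw [if_neg (by omega)]
    by_cases hj : j < (l.eraseIdx i).length
    · rw [List.getElem?_eq_getElem hj, List.getElem_eraseIdx, dif_neg (by omega),
        List.getElem?_eq_getElem (by omega)]
    · rw [List.getElem?_eq_none (by omega), List.getElem?_eq_none (by omega)]

lemma getElem?_insertIdx' {α} {l : List α} {i : ℕ} {x : α} (hi : i ≤ l.length) (j : ℕ) :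
    (l.insertIdx i x)[j]? = if j < i then l[j]? else if j = i then some x else l[j-1]? := by
  have hlen : (l.insertIdx i x).length = l.length + 1 := List.length_insertIdx_of_le_length hi x
  rcases Nat.lt_trichotomy j i with h | h | h
  · rw [if_pos h, List.getElem?_eq_getElem (show j < (l.insertIdx i x).length by omega),
      List.getElem?_eq_getElem (show j < l.length by omega)]
    exact congrArg some (List.getElem_insertIdx_of_lt h (by omega))
  · subst h
    rw [if_neg (by omega), if_pos rfl, List.getElem?_eq_getElem (by omega)]
    exact congrArg some (List.getElem_insertIdx_self (by omega))
  · rw [if_neg (by omega), if_neg (by omega)]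
    by_cases hj : j - 1 < l.length
    · obtain ⟨k, rfl⟩ : ∃ k, j = i + k + 1 := ⟨j - i - 1, by omega⟩
      have h1 : i + k < l.length := by omega
      rw [List.getElem?_eq_getElem (show i + k + 1 < (l.insertIdx i x).length by omega),
        show i + k + 1 - 1 = i + k from by omega, List.getElem?_eq_getElem h1]
      exact congrArg some (List.getElem_insertIdx_add_succ l x i k h1 _)
    · rw [List.getElem?_eq_none (by omega), List.getElem?_eq_none (by omega)]

lemma chain'_lt_get {l : List ℕ} (h : l.Chain' (· < ·)) {i j : ℕ} {x y : ℕ}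
    (hij : i < j) (hx : l[i]? = some x) (hy : l[j]? = some y) : x < y := by
  unfold List.Chain' at h; rw [List.isChain_iff_pairwise, List.pairwise_iff_getElem] at h
  rw [List.getElem?_eq_some_iff] at hx hy
  obtain ⟨hi, rfl⟩ := hx; obtain ⟨hj, rfl⟩ := hy
  exact h i j hi hj hij

lemma chain'_le_get {l : List ℕ} (h : l.Chain' (· < ·)) {i j : ℕ} {x y : ℕ}
    (hij : i ≤ j) (hx : l[i]? = some x) (hy : l[j]? = some y) : x ≤ y := by
  rcases Nat.lt_or_ge i j with h' | h'
  · exact (chain'_lt_get h h' hx hy).le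
  · have : i = j := by omega
    subst this; rw [hx] at hy; exact (Option.some_inj.1 hy).le

lemma chain'_of_get {l : List ℕ}
    (h : ∀ (i j x y : ℕ), i < j → l[i]? = some x → l[j]? = some y → x < y) : l.Chain' (· < ·) := by
  unfold List.Chain'; rw [List.isChain_iff_pairwise, List.pairwise_iff_getElem]
  intro i j hi hj hij
  exact h i j l[i] l[j] hij (List.getElem?_eq_getElem hi) (List.getElem?_eq_getElem hj)

lemma chain'_sublist {l l' : List ℕ} (h : l.Chain' (· < ·)) (hs : List.Sublist l' l) :
    l'.Chain' (· < ·) := by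
  unfold List.Chain' at h ⊢; rw [List.isChain_iff_pairwise] at h ⊢
  exact h.sublist hs

lemma insertIdx_eq {α} : ∀ (i : ℕ) (l : List α) (x : α), i ≤ l.length →
    l.insertIdx i x = l.take i ++ x :: l.drop i
  | 0, l, x, _ => rfl
  | i+1, [], x, h => by simp at h
  | i+1, a :: l, x, h => by
    simp only [List.insertIdx_succ_cons, List.take_succ_cons, List.drop_succ_cons,
      List.cons_append]
    rw [insertIdx_eq i l x (by simpa using h)]

lemma insertIdx_eraseIdx_self {α} {l : List α} {i : ℕ} {x : α} (h : l[i]? = some x) :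
    (l.eraseIdx i).insertIdx i x = l := by
  rw [List.getElem?_eq_some_iff] at h
  obtain ⟨hi, rfl⟩ := h
  have hlen : (l.eraseIdx i).length = l.length - 1 := by
    rw [List.length_eraseIdx]; simp [hi]
  apply List.ext_getElem?
  intro j
  rw [getElem?_insertIdx' (by omega) j]
  rcases Nat.lt_trichotomy j i with h | h | h
  · rw [if_pos h, getElem?_eraseIdx' hi j, if_pos h]
  · subst h
    rw [if_neg (by omega), if_pos rfl, List.getElem?_eq_getElem hi]
  · rw [if_neg (by omega), if_neg (by omega), getElem?_eraseIdx' hi (j-1), if_neg (by omega),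
      show j - 1 + 1 = j from by omega]

lemma ECond_true_iff (b : ℕ) (L R : List ℕ) (i : ℕ) :
    ECond b L R i = true ↔ ∃ x, L[i]? = some x ∧
      (b + i = 0 ∨ R[b + i - 1]? = none ∨ ∃ y, R[b + i - 1]? = some y ∧ y < x) := by
  unfold ECond
  cases hx : L[i]? with
  | none => simp
  | some x =>
    by_cases h0 : b + i = 0
    · simp [h0]
    · cases hy : R[b + i - 1]? with
      | none => simp [h0, hy]
      | some y => simp [h0, hy]

lemma FCond_true_iff (b : ℕ) (L R : List ℕ) (i : ℕ) :
    FCond b L R i = true ↔ ∃ y, R[b - 1 + i]? = some y ∧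
      (L[i]? = none ∨ ∃ x, L[i]? = some x ∧ y < x) := by
  unfold FCond
  cases hy : R[b - 1 + i]? with
  | none =>
    cases hx : L[i]? with
    | none => simp
    | some x => simp
  | some y =>
    cases hx : L[i]? with
    | none => simp
    | some x => simp



lemma E_main {a b c : ℕ} {L R : List ℕ} (hL : L.length = c + a) (hR : R.length = b + c)
    (hssd : PairSSD b L R) (hr : SlideZero a b L R) (ha : 0 < a) :
    ∃ i x, i ≤ c ∧ L[i]? = some x ∧
      Eop (b, L, R) = some (b + 1, L.eraseIdx i, R.insertIdx (b + i) x) ∧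
      PairSSD (b + 1) (L.eraseIdx i) (R.insertIdx (b + i) x) ∧
      SlideZero (a - 1) (b + 1) (L.eraseIdx i) (R.insertIdx (b + i) x) ∧
      Fop (b + 1, L.eraseIdx i, R.insertIdx (b + i) x) = some (b, L, R) := by
  obtain ⟨hcL, hcR, hov⟩ := hssd
  -- existence of a valid slide position
  have hex : ∃ i₀, i₀ ≤ c ∧ ECond b L R i₀ = true := by
    by_cases hb0 : b = 0
    · refine ⟨0, Nat.zero_le _, ?_⟩
      rw [ECond_true_iff]
      exact ⟨L[0], List.getElem?_eq_getElem (by omega), Or.inl (by omega)⟩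
    · rcases hr with h | h | ⟨i₀, x, y, hx, hy, hyx⟩
      · omega
      · omega
      · have hi₀ : i₀ ≤ c := by
          have := (List.getElem?_eq_some_iff.1 hy).1; omega
        refine ⟨i₀, hi₀, ?_⟩
        rw [ECond_true_iff]
        exact ⟨x, hx, Or.inr (Or.inr ⟨y, hy, hyx⟩)⟩
  obtain ⟨i₀, hi₀c, hi₀P⟩ := hex
  set istar := Nat.findGreatest (fun i => ECond b L R i = true) c with histar_def
  have hPi : ECond b L R istar = true := Nat.findGreatest_spec (P := fun i => ECond b L R i = true) hi₀c hi₀P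
  have histar : istar ≤ c := Nat.findGreatest_le c
  have hmax : ∀ j, istar < j → j ≤ c → ¬ (ECond b L R j = true) :=
    fun j h1 h2 => Nat.findGreatest_is_greatest (P := fun i => ECond b L R i = true) h1 h2
  obtain ⟨x, hx, hdisj⟩ := (ECond_true_iff b L R istar).1 hPi
  have hxlen : istar < L.length := (List.getElem?_eq_some_iff.1 hx).1
  -- HE1
  have HE1 : 0 < b + istar → ∃ y₀, R[b + istar - 1]? = some y₀ ∧ y₀ < x := by
    intro hpos
    rcases hdisj with h | h | h
    · omega
    · rw [List.getElem?_eq_none_iff] at h; omega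
    · exact h
  -- monotone helper: maximality gives L[j] ≤ R[b+j-1] for istar < j
  have hML : ∀ (j x' y' : ℕ), istar < j → L[j]? = some x' → R[b + j - 1]? = some y' → x' ≤ y' := by
    intro j x' y' hj hx' hy'
    by_contra hlt
    have hjc : j ≤ c := by
      have := (List.getElem?_eq_some_iff.1 hy').1; omega
    exact hmax j hj hjc ((ECond_true_iff b L R j).2 ⟨x', hx', Or.inr (Or.inr ⟨y', hy', by omega⟩)⟩)
  -- HE2
  have HE2 : ∀ y : ℕ, R[b + istar]? = some y → x < y := by
    intro y hy
    have hic : istar < c := by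
      have := (List.getElem?_eq_some_iff.1 hy).1; omega
    have hx1 : L[istar + 1]? = some L[istar + 1] := List.getElem?_eq_getElem (by omega)
    have h1 : L[istar + 1] ≤ y := hML (istar + 1) _ y (Nat.lt_succ_self _) hx1
      (by rw [show b + (istar + 1) - 1 = b + istar from by omega]; exact hy)
    have h2 : x < L[istar + 1] := chain'_lt_get hcL (Nat.lt_succ_self _) hx hx1
    omega
  have hltx : ∀ (k z : ℕ), k < b + istar → R[k]? = some z → z < x := by
    intro k z hk hz
    obtain ⟨y₀, hy₀, hy₀x⟩ := HE1 (by omega)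
    rcases Nat.lt_or_ge k (b + istar - 1) with h | h
    · exact lt_trans (chain'_lt_get hcR h hz hy₀) hy₀x
    · have : k = b + istar - 1 := by omega
      subst this; rw [hz] at hy₀
      have := Option.some_inj.1 hy₀; omega
  have hxlt : ∀ (k z : ℕ), b + istar ≤ k → R[k]? = some z → x < z := by
    intro k z hk hz
    rcases Nat.lt_or_ge (b + istar) k with h | h
    · have hbl : b + istar < R.length := by
        have := (List.getElem?_eq_some_iff.1 hz).1; omega
      have hbi : R[b + istar]? = some R[b + istar] := List.getElem?_eq_getElem hbl
      exact lt_trans (HE2 _ hbi) (chain'_lt_get hcR h hbi hz)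
    · have : k = b + istar := by omega
      subst this; exact HE2 z hz
  -- the find? computation
  have hfind : ((List.range (R.length - b + 1)).reverse).find? (fun i => ECond b L R i)
      = some istar := by
    apply find?_range_rev_max (by omega) hPi
    intro j h1 h2
    exact hmax j h1 (by omega)
  have hEop : Eop (b, L, R) = some (b + 1, L.eraseIdx istar, R.insertIdx (b + istar) x) := by
    unfold Eop
    simp only [if_neg (show ¬ (L.length + b ≤ R.length) by omega), hfind, hx]
  have hbiR : b + istar ≤ R.length := by omega
  -- getElem? descriptions
  have hLe : ∀ j : ℕ, (L.eraseIdx istar)[j]? = if j < istar then L[j]? else L[j+1]? :=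
    getElem?_eraseIdx' hxlen
  have hRi : ∀ j : ℕ, (R.insertIdx (b + istar) x)[j]? =
      if j < b + istar then R[j]? else if j = b + istar then some x else R[j-1]? :=
    getElem?_insertIdx' hbiR
  -- PairSSD of the result
  have hssd' : PairSSD (b + 1) (L.eraseIdx istar) (R.insertIdx (b + istar) x) := by
    refine ⟨chain'_sublist hcL (List.eraseIdx_sublist _ _), ?_, ?_⟩
    · apply chain'_of_get
      intro i j u v hij hu hv
      rw [hRi i] at hu; rw [hRi j] at hv
      rcases Nat.lt_trichotomy i (b + istar) with hi | hi | hi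
      · rw [if_pos hi] at hu
        rcases Nat.lt_trichotomy j (b + istar) with hj | hj | hj
        · rw [if_pos hj] at hv
          exact chain'_lt_get hcR hij hu hv
        · rw [if_neg (by omega), if_pos hj] at hv
          have hxv := Option.some_inj.1 hv
          have := hltx i u hi hu; omega
        · rw [if_neg (by omega), if_neg (by omega)] at hv
          exact lt_trans (hltx i u hi hu) (hxlt (j-1) v (by omega) hv)
      · rw [if_neg (by omega), if_pos hi] at hu
        have hxu := Option.some_inj.1 hu
        rcases Nat.lt_trichotomy j (b + istar) with hj | hj | hj
        · omega
        · omega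
        · rw [if_neg (by omega), if_neg (by omega)] at hv
          have := hxlt (j-1) v (by omega) hv; omega
      · rw [if_neg (by omega), if_neg (by omega)] at hu
        rcases Nat.lt_trichotomy j (b + istar) with hj | hj | hj
        · omega
        · omega
        · rw [if_neg (by omega), if_neg (by omega)] at hv
          exact chain'_lt_get hcR (by omega) hu hv
    · intro i u v hu hv
      rw [hLe i] at hu; rw [hRi (b + 1 + i)] at hv
      rcases Nat.lt_or_ge i istar with hi | hi
      · rw [if_pos hi] at hu
        rcases Nat.lt_or_ge (b + 1 + i) (b + istar) with hj | hj
        · rw [if_pos hj] at hv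
          have hbi : b + i < R.length := by
            have := (List.getElem?_eq_some_iff.1 hv).1; omega
          have h1 := hov i u (R[b+i]) hu (List.getElem?_eq_getElem hbi)
          have h2 : R[b+i] < v :=
            chain'_lt_get hcR (by omega) (List.getElem?_eq_getElem hbi) hv
          omega
        · rw [if_neg (by omega), if_pos (by omega : b + 1 + i = b + istar)] at hv
          have hv' := Option.some_inj.1 hv
          have : u < x := chain'_lt_get hcL (by omega) hu hx
          omega
      · rw [if_neg (by omega)] at hu
        rw [if_neg (by omega), if_neg (by omega)] at hv
        exact hML (i+1) u v (by omega) hu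
          (by rw [show b + (i+1) - 1 = b + 1 + i - 1 from by omega]; exact hv)
  -- SlideZero of the result
  have hsz' : SlideZero (a - 1) (b + 1) (L.eraseIdx istar) (R.insertIdx (b + istar) x) := by
    by_cases ha1 : a - 1 = 0
    · exact Or.inl ha1
    · refine Or.inr (Or.inr ⟨istar, L[istar + 1], x, ?_, ?_, ?_⟩)
      · rw [hLe istar, if_neg (by omega)]
        exact List.getElem?_eq_getElem (by omega)
      · rw [show b + 1 + istar - 1 = b + istar from by omega, hRi (b + istar),
          if_neg (by omega), if_pos rfl]
      · exact chain'_lt_get hcL (Nat.lt_succ_self _) hx (List.getElem?_eq_getElem (by omega))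
  -- the inverse computation
  have hRx : (R.insertIdx (b + istar) x)[b + 1 - 1 + istar]? = some x := by
    rw [show b + 1 - 1 + istar = b + istar from by omega, hRi (b + istar),
      if_neg (by omega), if_pos rfl]
  have hFi : FCond (b + 1) (L.eraseIdx istar) (R.insertIdx (b + istar) x) istar = true := by
    rw [FCond_true_iff]
    refine ⟨x, hRx, ?_⟩
    cases hLi : (L.eraseIdx istar)[istar]? with
    | none => exact Or.inl rfl
    | some x₁ =>
      refine Or.inr ⟨x₁, rfl, ?_⟩
      rw [hLe istar, if_neg (by omega)] at hLi
      exact chain'_lt_get hcL (Nat.lt_succ_self _) hx hLi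
  have hFmin : ∀ j, j < istar →
      ¬ (FCond (b + 1) (L.eraseIdx istar) (R.insertIdx (b + istar) x) j = true) := by
    intro j hj hF
    obtain ⟨y, hy, hor⟩ := (FCond_true_iff _ _ _ j).1 hF
    rw [show b + 1 - 1 + j = b + j from by omega, hRi (b + j), if_pos (by omega)] at hy
    have hLj : (L.eraseIdx istar)[j]? = L[j]? := by rw [hLe j, if_pos hj]
    rcases hor with h | ⟨x₂, hx₂, hlt⟩
    · rw [hLj, List.getElem?_eq_none_iff] at h; omega
    · rw [hLj] at hx₂
      have := hov j x₂ y hx₂ hy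
      omega
  have hfind2 : (List.range ((L.eraseIdx istar).length + 1)).find?
      (fun i => FCond (b + 1) (L.eraseIdx istar) (R.insertIdx (b + istar) x) i) = some istar := by
    apply find?_range_min ?_ hFi hFmin
    have : (L.eraseIdx istar).length = L.length - 1 := by rw [List.length_eraseIdx]; simp [hxlen]
    omega
  have hFop : Fop (b + 1, L.eraseIdx istar, R.insertIdx (b + istar) x) = some (b, L, R) := by
    unfold Fop
    simp only [if_neg (Nat.succ_ne_zero b), hfind2, hRx]
    have h1 : (L.eraseIdx istar).take istar ++ x :: (L.eraseIdx istar).drop istar = L := by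
      rw [← insertIdx_eq istar _ x (by rw [List.length_eraseIdx]; simp [hxlen]; omega)]
      exact insertIdx_eraseIdx_self hx
    have h2 : (R.insertIdx (b + istar) x).eraseIdx (b + 1 - 1 + istar) = R := by
      rw [show b + 1 - 1 + istar = b + istar from by omega]
      exact List.eraseIdx_insertIdx_self _
    rw [h1, h2]
    simp
  exact ⟨istar, x, histar, hx, hEop, hssd', hsz', hFop⟩

lemma F_main {a b c : ℕ} {L R : List ℕ} (hL : L.length = c + a) (hR : R.length = b + c)
    (hssd : PairSSD b L R) (hr : SlideZero a b L R) (hb : 0 < b) :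
    ∃ i y, i ≤ c ∧ R[b - 1 + i]? = some y ∧
      Fop (b, L, R) = some (b - 1, L.insertIdx i y, R.eraseIdx (b - 1 + i)) ∧
      PairSSD (b - 1) (L.insertIdx i y) (R.eraseIdx (b - 1 + i)) ∧
      SlideZero (a + 1) (b - 1) (L.insertIdx i y) (R.eraseIdx (b - 1 + i)) ∧
      Eop (b - 1, L.insertIdx i y, R.eraseIdx (b - 1 + i)) = some (b, L, R) := by
  obtain ⟨hcL, hcR, hov⟩ := hssd
  have hFex : ∃ i, FCond b L R i = true := by
    by_cases ha0 : a = 0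
    · refine ⟨c, ?_⟩
      rw [FCond_true_iff]
      refine ⟨R[b - 1 + c], List.getElem?_eq_getElem (by omega), Or.inl ?_⟩
      rw [List.getElem?_eq_none_iff]; omega
    · rcases hr with h | h | ⟨i₀, x, y, hx, hy, hyx⟩
      · omega
      · omega
      · refine ⟨i₀, ?_⟩
        rw [FCond_true_iff]
        exact ⟨y, by rw [show b - 1 + i₀ = b + i₀ - 1 from by omega]; exact hy,
          Or.inr ⟨x, hx, hyx⟩⟩
  set istar := Nat.find hFex with histar_def
  have hPi : FCond b L R istar = true := Nat.find_spec hFex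
  have hminP : ∀ j, j < istar → ¬ (FCond b L R j = true) := fun j hj => Nat.find_min hFex hj
  obtain ⟨y, hy, hor⟩ := (FCond_true_iff b L R istar).1 hPi
  have histar : istar ≤ c := by
    have := (List.getElem?_eq_some_iff.1 hy).1; omega
  have hyx : ∀ x' : ℕ, L[istar]? = some x' → y < x' := by
    intro x' hx'
    rcases hor with h | ⟨x'', hx'', hlt⟩
    · rw [hx'] at h; exact absurd h (by simp)
    · rw [hx'] at hx''; have := Option.some_inj.1 hx''; omega
  have hmin : ∀ (j x' y' : ℕ), j < istar → L[j]? = some x' → R[b - 1 + j]? = some y' →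
      x' ≤ y' := by
    intro j x' y' hj hx' hy'
    by_contra hlt
    exact hminP j hj ((FCond_true_iff b L R j).2 ⟨y', hy', Or.inr ⟨x', hx', by omega⟩⟩)
  have hylt : ∀ (k z : ℕ), istar ≤ k → L[k]? = some z → y < z := by
    intro k z hk hz
    rcases Nat.lt_or_ge istar k with h | h
    · have hkl : istar < L.length := by
        have := (List.getElem?_eq_some_iff.1 hz).1; omega
      have hi : L[istar]? = some L[istar] := List.getElem?_eq_getElem hkl
      exact lt_trans (hyx _ hi) (chain'_lt_get hcL h hi hz)
    · have : k = istar := by omega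
      subst this; exact hyx z hz
  have hlty : ∀ (k z : ℕ), k < istar → L[k]? = some z → z < y := by
    intro k z hk hz
    have hi1 : L[istar - 1]? = some L[istar - 1] := List.getElem?_eq_getElem (by omega)
    have hR2 : R[b - 1 + (istar - 1)]? = some R[b - 1 + (istar - 1)] :=
      List.getElem?_eq_getElem (by omega)
    have h1 : L[istar - 1] ≤ R[b - 1 + (istar - 1)] := hmin (istar - 1) _ _ (by omega) hi1 hR2
    have h2 : R[b - 1 + (istar - 1)] < y := chain'_lt_get hcR (by omega) hR2 hy
    have h3 : z ≤ L[istar - 1] := chain'_le_get hcL (by omega) hz hi1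
    omega
  have hiL : istar ≤ L.length := by omega
  have hbiR : b - 1 + istar < R.length := (List.getElem?_eq_some_iff.1 hy).1
  have hLi : ∀ j : ℕ, (L.insertIdx istar y)[j]? =
      if j < istar then L[j]? else if j = istar then some y else L[j-1]? :=
    getElem?_insertIdx' hiL
  have hRe : ∀ j : ℕ, (R.eraseIdx (b - 1 + istar))[j]? =
      if j < b - 1 + istar then R[j]? else R[j+1]? :=
    getElem?_eraseIdx' hbiR
  have hlenL' : (L.insertIdx istar y).length = L.length + 1 := List.length_insertIdx_of_le_length hiL y
  have hlenR' : (R.eraseIdx (b - 1 + istar)).length = R.length - 1 := by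
    rw [List.length_eraseIdx]; simp [hbiR]
  have hssd' : PairSSD (b - 1) (L.insertIdx istar y) (R.eraseIdx (b - 1 + istar)) := by
    refine ⟨?_, chain'_sublist hcR (List.eraseIdx_sublist _ _), ?_⟩
    · apply chain'_of_get
      intro i j u v hij hu hv
      rw [hLi i] at hu; rw [hLi j] at hv
      rcases Nat.lt_trichotomy i istar with hi | hi | hi
      · rw [if_pos hi] at hu
        rcases Nat.lt_trichotomy j istar with hj | hj | hj
        · rw [if_pos hj] at hv
          exact chain'_lt_get hcL hij hu hv
        · rw [if_neg (by omega), if_pos hj] at hv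
          have := Option.some_inj.1 hv
          have := hlty i u hi hu; omega
        · rw [if_neg (by omega), if_neg (by omega)] at hv
          exact lt_trans (hlty i u hi hu) (hylt (j-1) v (by omega) hv)
      · rw [if_neg (by omega), if_pos hi] at hu
        have := Option.some_inj.1 hu
        rcases Nat.lt_trichotomy j istar with hj | hj | hj
        · omega
        · omega
        · rw [if_neg (by omega), if_neg (by omega)] at hv
          have := hylt (j-1) v (by omega) hv; omega
      · rw [if_neg (by omega), if_neg (by omega)] at hu
        rcases Nat.lt_trichotomy j istar with hj | hj | hj
        · omega
        · omega
        · rw [if_neg (by omega), if_neg (by omega)] at hv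
          exact chain'_lt_get hcL (by omega) hu hv
    · intro i u v hu hv
      rw [hLi i] at hu; rw [hRe (b - 1 + i)] at hv
      rcases Nat.lt_trichotomy i istar with hi | hi | hi
      · rw [if_pos hi] at hu
        rw [if_pos (by omega)] at hv
        exact hmin i u v hi hu hv
      · rw [if_neg (by omega), if_pos hi] at hu
        have hu' := Option.some_inj.1 hu
        rw [if_neg (by omega)] at hv
        have : y < v := by
          subst hi
          exact chain'_lt_get hcR (by omega) hy hv
        omega
      · rw [if_neg (by omega), if_neg (by omega)] at hu
        rw [if_neg (by omega)] at hv
        have hbv : b - 1 + i + 1 = b + i := by omega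
        rw [hbv] at hv
        have hbl : b + (i - 1) < R.length := by
          have := (List.getElem?_eq_some_iff.1 hv).1; omega
        have h1 := hov (i-1) u (R[b + (i-1)]) hu (List.getElem?_eq_getElem hbl)
        have h2 : R[b + (i-1)] < v :=
          chain'_lt_get hcR (by omega) (List.getElem?_eq_getElem hbl) hv
        omega
  have hsz' : SlideZero (a + 1) (b - 1) (L.insertIdx istar y) (R.eraseIdx (b - 1 + istar)) := by
    by_cases hb1 : b - 1 = 0
    · exact Or.inr (Or.inl hb1)
    · refine Or.inr (Or.inr ⟨istar, y, R[b + istar - 2], ?_, ?_, ?_⟩)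
      · rw [hLi istar, if_neg (by omega), if_pos rfl]
      · rw [show b - 1 + istar - 1 = b + istar - 2 from by omega, hRe (b + istar - 2),
          if_pos (by omega)]
        exact List.getElem?_eq_getElem (by omega)
      · exact chain'_lt_get hcR (by omega) (List.getElem?_eq_getElem (by omega : b + istar - 2 < R.length)) hy
  -- inverse Eop computation
  have hL'i : (L.insertIdx istar y)[istar]? = some y := by
    rw [hLi istar, if_neg (by omega), if_pos rfl]
  have hEi : ECond (b - 1) (L.insertIdx istar y) (R.eraseIdx (b - 1 + istar)) istar = true := by
    rw [ECond_true_iff]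
    refine ⟨y, hL'i, ?_⟩
    by_cases h0 : b - 1 + istar = 0
    · exact Or.inl h0
    · refine Or.inr (Or.inr ⟨R[b - 1 + istar - 1], ?_, ?_⟩)
      · rw [hRe (b - 1 + istar - 1), if_pos (by omega)]
        exact List.getElem?_eq_getElem (by omega)
      · exact chain'_lt_get hcR (by omega)
          (List.getElem?_eq_getElem (by omega : b - 1 + istar - 1 < R.length)) hy
  have hEmax : ∀ j, istar < j → j ≤ c →
      ¬ (ECond (b - 1) (L.insertIdx istar y) (R.eraseIdx (b - 1 + istar)) j = true) := by
    intro j h1 h2 hEC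
    obtain ⟨x'', hx'', hor2⟩ := (ECond_true_iff _ _ _ j).1 hEC
    rw [hLi j, if_neg (by omega), if_neg (by omega)] at hx''
    have hidx : b - 1 + j - 1 + 1 = b + j - 1 := by omega
    rcases hor2 with h | h | ⟨y'', hy'', hlt⟩
    · omega
    · rw [hRe (b - 1 + j - 1), if_neg (by omega), hidx, List.getElem?_eq_none_iff] at h
      omega
    · rw [hRe (b - 1 + j - 1), if_neg (by omega), hidx] at hy''
      have := hov (j-1) x'' y'' hx''
        (by rw [show b + (j-1) = b + j - 1 from by omega]; exact hy'')
      omega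
  have hfind3 : ((List.range ((R.eraseIdx (b - 1 + istar)).length - (b - 1) + 1)).reverse).find?
      (fun i => ECond (b - 1) (L.insertIdx istar y) (R.eraseIdx (b - 1 + istar)) i)
      = some istar := by
    apply find?_range_rev_max (by omega) hEi
    intro j hj1 hj2
    exact hEmax j hj1 (by omega)
  have hEopInv : Eop (b - 1, L.insertIdx istar y, R.eraseIdx (b - 1 + istar))
      = some (b, L, R) := by
    unfold Eop
    simp only [if_neg (show ¬ ((L.insertIdx istar y).length + (b - 1) ≤
      (R.eraseIdx (b - 1 + istar)).length) by omega), hfind3, hL'i]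
    rw [List.eraseIdx_insertIdx_self, insertIdx_eraseIdx_self hy,
      show b - 1 + 1 = b from by omega]
  have hfindF : (List.range (L.length + 1)).find? (fun i => FCond b L R i) = some istar :=
    find?_range_min (by omega) hPi hminP
  have hFop : Fop (b, L, R) = some (b - 1, L.insertIdx istar y, R.eraseIdx (b - 1 + istar)) := by
    unfold Fop
    simp only [if_neg (show ¬ (b = 0) by omega), hfindF, hy]
    rw [show L.take istar ++ y :: L.drop istar = L.insertIdx istar y from
      (insertIdx_eq istar L y hiL).symm]
  exact ⟨istar, y, histar, hy, hFop, hssd', hsz', hEopInv⟩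

lemma Eop_none {b : ℕ} {L R : List ℕ} (h : L.length + b ≤ R.length) :
    Eop (b, L, R) = none := by
  unfold Eop; simp only [if_pos h]

lemma Fop_none {L R : List ℕ} : Fop (0, L, R) = none := by
  unfold Fop; simp

def Inv (a b c : ℕ) (t : TC) : Prop :=
  t.1 = b ∧ t.2.1.length = c + a ∧ t.2.2.length = b + c ∧
    PairSSD b t.2.1 t.2.2 ∧ SlideZero a b t.2.1 t.2.2

lemma E_step {a b c : ℕ} {t : TC} (h : Inv a b c t) (ha : 0 < a) :
    ∃ t', Eop t = some t' ∧ Inv (a - 1) (b + 1) c t' ∧ Fop t' = some t := by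
  obtain ⟨b₀, L, R⟩ := t
  obtain ⟨hb, hL, hR, hssd, hr⟩ := h
  simp only at hb hL hR hssd hr
  subst hb
  obtain ⟨i, x, hic, hx, hEop, hssd', hsz', hFop⟩ := E_main hL hR hssd hr ha
  refine ⟨_, hEop, ⟨rfl, ?_, ?_, hssd', hsz'⟩, hFop⟩
  · have hil : i < L.length := (List.getElem?_eq_some_iff.1 hx).1
    simp only
    rw [List.length_eraseIdx, if_pos hil]
    omega
  · simp only
    rw [List.length_insertIdx_of_le_length (show b₀ + i ≤ R.length by omega)]
    omega

lemma F_step {a b c : ℕ} {t : TC} (h : Inv a b c t) (hb : 0 < b) :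
    ∃ t', Fop t = some t' ∧ Inv (a + 1) (b - 1) c t' ∧ Eop t' = some t := by
  obtain ⟨b₀, L, R⟩ := t
  obtain ⟨hbq, hL, hR, hssd, hr⟩ := h
  simp only at hbq hL hR hssd hr
  subst hbq
  obtain ⟨i, y, hic, hy, hFop, hssd', hsz', hEop⟩ := F_main hL hR hssd hr hb
  refine ⟨_, hFop, ⟨rfl, ?_, ?_, hssd', hsz'⟩, hEop⟩
  · simp only
    rw [List.length_insertIdx_of_le_length (show i ≤ L.length by omega)]
    omega
  · have hil : b₀ - 1 + i < R.length := (List.getElem?_eq_some_iff.1 hy).1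
    simp only
    rw [List.length_eraseIdx, if_pos hil]
    omega

lemma iterE_inv : ∀ (k a b : ℕ) {c : ℕ} {t : TC}, Inv a b c t → k ≤ a →
    ∃ t', iterO Eop k t = some t' ∧ Inv (a - k) (b + k) c t'
  | 0, a, b, c, t, h, _ => ⟨t, rfl, by simpa using h⟩
  | k+1, a, b, c, t, h, hk => by
    obtain ⟨t₁, hE, h₁, _⟩ := E_step h (by omega)
    obtain ⟨t', hit, h'⟩ := iterE_inv k (a-1) (b+1) h₁ (by omega)
    refine ⟨t', ?_, ?_⟩
    · show (Eop t).bind (iterO Eop k) = some t'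
      rw [hE]; exact hit
    · rw [show a - (k+1) = a - 1 - k from by omega, show b + (k+1) = b + 1 + k from by omega]
      exact h'

lemma iterF_inv : ∀ (k a b : ℕ) {c : ℕ} {t : TC}, Inv a b c t → k ≤ b →
    ∃ t', iterO Fop k t = some t' ∧ Inv (a + k) (b - k) c t'
  | 0, a, b, c, t, h, _ => ⟨t, rfl, by simpa using h⟩
  | k+1, a, b, c, t, h, hk => by
    obtain ⟨t₁, hF, h₁, _⟩ := F_step h (by omega)
    obtain ⟨t', hit, h'⟩ := iterF_inv k (a+1) (b-1) h₁ (by omega)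
    refine ⟨t', ?_, ?_⟩
    · show (Fop t).bind (iterO Fop k) = some t'
      rw [hF]; exact hit
    · rw [show a + (k+1) = a + 1 + k from by omega, show b - (k+1) = b - 1 - k from by omega]
      exact h'

end KN

open KN

theorem two_column_jdt_sl2 (a b c : ℕ) (L R : List ℕ)
    (hL : L.length = c + a) (hR : R.length = b + c)
    (hssd : PairSSD b L R) (hr : SlideZero a b L R) :
    -- (1) `𝓔` is defined exactly when `a > 0`, produces a semistandard tableau of shape
    -- `λ(a−1,b+1,c)` with `r = 0`:
    ((Eop (b, L, R)).isSome ↔ 0 < a) ∧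
    (∀ b' L' R', Eop (b, L, R) = some (b', L', R') →
        b' = b + 1 ∧ L'.length = c + (a - 1) ∧ R'.length = (b + 1) + c ∧
        PairSSD b' L' R' ∧ SlideZero (a - 1) (b + 1) L' R') ∧
    -- (2) same for `𝓕` with shape `λ(a+1,b−1,c)`:
    ((Fop (b, L, R)).isSome ↔ 0 < b) ∧
    (∀ b' L' R', Fop (b, L, R) = some (b', L', R') →
        b' = b - 1 ∧ L'.length = c + (a + 1) ∧ R'.length = (b - 1) + c ∧
        PairSSD b' L' R' ∧ SlideZero (a + 1) (b - 1) L' R') ∧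
    -- (3) the `sl₂`-string structure: `𝓔^k T` is defined for all `k ≤ a`, `𝓕^l T` for all
    -- `l ≤ b`, the string has length exactly `a + b`, and `𝓔`, `𝓕` are mutually inverse:
    (∀ k ≤ a, (iterO Eop k (b, L, R)).isSome) ∧
    (∀ l ≤ b, (iterO Fop l (b, L, R)).isSome) ∧
    (∀ t, iterO Eop a (b, L, R) = some t → Eop t = none) ∧
    (∀ t, iterO Fop b (b, L, R) = some t → Fop t = none) ∧
    (∀ k t t', k < a → iterO Eop k (b, L, R) = some t → Eop t = some t' →
        Fop t' = some t) ∧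
    (∀ l t t', l < b → iterO Fop l (b, L, R) = some t → Fop t = some t' →
        Eop t' = some t) := by
  have hInv : Inv a b c (b, L, R) := ⟨rfl, hL, hR, hssd, hr⟩
  have hEiff : (Eop (b, L, R)).isSome ↔ 0 < a := by
    constructor
    · intro h
      by_contra ha
      rw [Eop_none (by omega)] at h
      simp at h
    · intro ha
      obtain ⟨t', hE, _, _⟩ := E_step hInv ha
      rw [hE]; rfl
  have hFiff : (Fop (b, L, R)).isSome ↔ 0 < b := by
    constructor
    · intro h
      by_contra hb
      have hb0 : b = 0 := by omega
      subst hb0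
      rw [Fop_none] at h
      simp at h
    · intro hb
      obtain ⟨t', hF, _, _⟩ := F_step hInv hb
      rw [hF]; rfl
  refine ⟨hEiff, ?_, hFiff, ?_, ?_, ?_, ?_, ?_, ?_, ?_⟩
  · intro b' L' R' hE
    have ha : 0 < a := by
      rcases Nat.eq_zero_or_pos a with h0 | h
      · rw [Eop_none (by omega)] at hE
        exact absurd hE (by simp)
      · exact h
    obtain ⟨t', hE', hI, _⟩ := E_step hInv ha
    rw [hE] at hE'
    obtain rfl := Option.some_inj.1 hE'
    obtain ⟨h1, h2, h3, h4, h5⟩ := hI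
    simp only at h1 h2 h3 h4 h5
    exact ⟨h1, h2, h3, h1 ▸ h4, h5⟩
  · intro b' L' R' hF
    have hb : 0 < b := by
      rcases Nat.eq_zero_or_pos b with h0 | h
      · subst h0
        rw [Fop_none] at hF
        exact absurd hF (by simp)
      · exact h
    obtain ⟨t', hF', hI, _⟩ := F_step hInv hb
    rw [hF] at hF'
    obtain rfl := Option.some_inj.1 hF'
    obtain ⟨h1, h2, h3, h4, h5⟩ := hI
    simp only at h1 h2 h3 h4 h5
    exact ⟨h1, h2, h3, h1 ▸ h4, h5⟩
  · intro k hk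
    obtain ⟨t, ht, _⟩ := iterE_inv k a b hInv hk
    rw [ht]; rfl
  · intro l hl
    obtain ⟨t, ht, _⟩ := iterF_inv l a b hInv hl
    rw [ht]; rfl
  · intro t ht
    obtain ⟨t', ht', hI⟩ := iterE_inv a a b hInv le_rfl
    rw [ht] at ht'
    obtain rfl := Option.some_inj.1 ht'
    obtain ⟨tb, tL, tR⟩ := t
    obtain ⟨h1, h2, h3, _, _⟩ := hI
    simp only at h1 h2 h3
    subst h1
    exact Eop_none (by omega)
  · intro t ht
    obtain ⟨t', ht', hI⟩ := iterF_inv b a b hInv le_rfl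
    rw [ht] at ht'
    obtain rfl := Option.some_inj.1 ht'
    obtain ⟨tb, tL, tR⟩ := t
    obtain ⟨h1, h2, h3, _, _⟩ := hI
    simp only at h1 h2 h3
    have hb0 : tb = 0 := by omega
    subst hb0
    exact Fop_none
  · intro k t t' hk hit hE
    obtain ⟨t₀, hit₀, hI⟩ := iterE_inv k a b hInv (by omega)
    rw [hit] at hit₀
    obtain rfl := Option.some_inj.1 hit₀
    obtain ⟨t'', hE'', _, hF⟩ := E_step hI (by omega)
    rw [hE] at hE''
    obtain rfl := Option.some_inj.1 hE''
    exact hF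
  · intro l t t' hl hit hF
    obtain ⟨t₀, hit₀, hI⟩ := iterF_inv l a b hInv (by omega)
    rw [hit] at hit₀
    obtain rfl := Option.some_inj.1 hit₀
    obtain ⟨t'', hF'', _, hE⟩ := F_step hI (by omega)
    rw [hF] at hF''
    obtain rfl := Option.some_inj.1 hF''
    exact hE
end

section
/- For single-column semistandard tableaux: if T is a tableau in T^{c_n}(a) (a two-column tableau of shape λ(a,0,c) over {n̄ < ⋯ < 1̄}), and T̃ is defined by gluing, below the column complementary to the right column of 𝓔^a T, the left column of 𝓔^a T, then T̃ is a Kashiwara-Nakashima column of type C_n of height n−a; that is, whenever T̃ contains both c̄ in row i₁ and c in row i₂ from the bottom with i₁ < i₂, one has i₁ + (n−a−i₂+1) ≤ c. -/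
open KN

/-- The tableau `~(^R T)`: the increasing column with entries the letters `k ∈ [n]`
(code `k−1`) such that `k̄` (code `2n−k`) does not occur in `^R T`. -/
def compBar (n : ℕ) (RT : List ℕ) : List ℕ :=
  (List.range n).filter fun j => ! RT.contains (2 * n - 1 - j)

/-- The map `T ↦ T̃` on `T^{c_n}(a)` (shape `λ(a,0,c)`, i.e. offset `b = 0`). -/
def tildeMap (n a : ℕ) (L R : List ℕ) : List ℕ :=
  match iterO Eop a (0, L, R) with
  | some t => compBar n t.2.2 ++ t.2.1
  | none => []

/-- The Kashiwara–Nakashima one-column condition (`c`-1) for a column of height `h`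
over `𝕁_n^×`: if `c̄` occurs at row `i₁` and `c` at row `i₂` from the bottom with
`i₁ < i₂`, then `i₁ + (h − i₂ + 1) ≤ c` (stated additively to avoid truncated
subtraction). -/
def KN1 (n h : ℕ) (l : List ℕ) : Prop :=
  ∀ c i₁ i₂, 1 ≤ c → c ≤ n →
    getB l i₁ = some (2 * n - c) → getB l i₂ = some (c - 1) → i₁ < i₂ →
      i₁ + h + 1 ≤ c + i₂


namespace KNAux
open List

lemma lt_len {α : Type*} {l : List α} {i : ℕ} {x : α} (h : l[i]? = some x) : i < l.length := by
  by_contra hc; rw [List.getElem?_eq_none (by omega)] at h; simp at h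

lemma sorted_le {l : List ℕ} (h : l.Pairwise (· < ·)) {i j : ℕ} (hij : i ≤ j)
    (hj : j < l.length) : l[i]'(by omega) ≤ l[j] := by
  rcases eq_or_lt_of_le hij with rfl | hlt
  · rfl
  · exact le_of_lt (List.pairwise_iff_getElem.mp h i j (by omega) hj hlt)

lemma sorted_lt {l : List ℕ} (h : l.Pairwise (· < ·)) {i j : ℕ} (hij : i < j)
    (hj : j < l.length) : l[i]'(by omega) < l[j] :=
  List.pairwise_iff_getElem.mp h i j (by omega) hj hij

lemma find?_range_reverse {p : ℕ → Bool} {m i : ℕ}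
    (h : ((List.range m).reverse).find? p = some i) :
    i < m ∧ p i = true ∧ ∀ j, i < j → j < m → p j = false := by
  induction m with
  | zero => simp at h
  | succ m ih =>
    rw [List.range_succ, List.reverse_append] at h
    simp only [List.reverse_singleton, List.singleton_append] at h
    by_cases hp : p m
    · rw [List.find?_cons_of_pos hp] at h
      obtain rfl : m = i := by simpa using h
      exact ⟨by omega, hp, fun j h1 h2 => by omega⟩
    · rw [List.find?_cons_of_neg hp] at h
      obtain ⟨h1, h2, h3⟩ := ih h
      refine ⟨by omega, h2, fun j hj1 hj2 => ?_⟩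
      rcases eq_or_lt_of_le (Nat.lt_succ_iff.mp hj2) with rfl | hlt
      · exact Bool.not_eq_true _ ▸ (by simpa using hp)
      · exact h3 j hj1 hlt

lemma getElem?_insertIdx' (l : List ℕ) (x q k : ℕ) (hq : q ≤ l.length) :
    (l.insertIdx q x)[k]? = if k < q then l[k]? else if k = q then some x else l[k-1]? := by
  have hlen : (l.insertIdx q x).length = l.length + 1 := List.length_insertIdx_of_le_length hq x
  split_ifs with h1 h2
  · have hk : k < l.length := by omega
    rw [List.getElem?_eq_getElem (by omega), List.getElem?_eq_getElem hk]
    exact congrArg some (List.getElem_insertIdx_of_lt h1 (by omega))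
  · subst h2
    rw [List.getElem?_eq_getElem (by omega)]
    exact congrArg some (List.getElem_insertIdx_self (by omega))
  · obtain ⟨k', rfl⟩ : ∃ k', k = k' + 1 := ⟨k - 1, by omega⟩
    simp only [Nat.add_sub_cancel]
    obtain ⟨d, rfl⟩ : ∃ d, k' = q + d := ⟨k' - q, by omega⟩
    by_cases hk2 : q + d < l.length
    · rw [List.getElem?_eq_getElem (show q + d + 1 < (l.insertIdx q x).length by omega),
        List.getElem?_eq_getElem hk2]
      exact congrArg some (List.getElem_insertIdx_add_succ l x q d hk2 (by rw [hlen]; omega))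
    · rw [List.getElem?_eq_none (by omega), List.getElem?_eq_none (by omega)]

lemma count_ge {l : List ℕ} (hl : l.Pairwise (· < ·)) {k v y : ℕ}
    (h : l[k]? = some y) (hv : v ≤ y) :
    l.length - k ≤ l.countP (fun z => decide (v ≤ z)) := by
  have hk : k < l.length := lt_len h
  have hdrop : (l.drop k).countP (fun z => decide (v ≤ z)) = (l.drop k).length := by
    rw [List.countP_eq_length]
    intro a ha
    obtain ⟨j, hj, hja⟩ := List.getElem_of_mem ha
    have hj' : k + j < l.length := by rw [List.length_drop] at hj; omega
    rw [List.getElem_drop] at hja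
    have h1 : l[k]'hk ≤ l[k + j]'hj' := sorted_le hl (by omega) hj'
    have h2 : l[k]'hk = y := by rw [List.getElem?_eq_getElem hk] at h; exact Option.some.inj h
    have h3 : l[k + j]'hj' = a := hja
    simp only [decide_eq_true_iff]
    omega
  calc l.length - k = (l.drop k).length := by rw [List.length_drop]
    _ = (l.drop k).countP (fun z => decide (v ≤ z)) := hdrop.symm
    _ ≤ l.countP (fun z => decide (v ≤ z)) := by
        conv_rhs => rw [← List.take_append_drop k l]
        rw [List.countP_append]; omega

lemma nodup_Ico_length {l : List ℕ} (hl : l.Nodup) {lo hi : ℕ}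
    (h : ∀ x ∈ l, lo ≤ x ∧ x < hi) : l.length ≤ hi - lo := by
  have h1 : l.toFinset ⊆ Finset.Ico lo hi := by
    intro x hx
    rw [List.mem_toFinset] at hx
    rw [Finset.mem_Ico]
    exact h x hx
  have := Finset.card_le_card h1
  rwa [List.toFinset_card_of_nodup hl, Nat.card_Ico] at this

end KNAux
namespace KNAux
open KN List

lemma sorted_le' {l : List ℕ} (h : l.Pairwise (· < ·)) {i j vi vj : ℕ} (hij : i ≤ j)
    (h1 : l[i]? = some vi) (h2 : l[j]? = some vj) : vi ≤ vj := by
  have hj := lt_len h2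
  rw [List.getElem?_eq_getElem (by omega)] at h1
  rw [List.getElem?_eq_getElem hj] at h2
  have := sorted_le h hij hj
  injection h1 with h1'; injection h2 with h2'; omega
  
lemma sorted_lt' {l : List ℕ} (h : l.Pairwise (· < ·)) {i j vi vj : ℕ} (hij : i < j)
    (h1 : l[i]? = some vi) (h2 : l[j]? = some vj) : vi < vj := by
  have hj := lt_len h2
  rw [List.getElem?_eq_getElem (by omega)] at h1
  rw [List.getElem?_eq_getElem hj] at h2
  have := sorted_lt h hij hj
  injection h1 with h1'; injection h2 with h2'; omega

lemma ECond_eq {b i x : ℕ} {L R : List ℕ} (hx : L[i]? = some x) :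
    ECond b L R i = if b + i = 0 then true
      else match R[b + i - 1]? with
        | none => true
        | some y => decide (y < x) := by
  unfold ECond; rw [hx]

lemma ECond_ss {b i x y : ℕ} {L R : List ℕ} (hx : L[i]? = some x)
    (hy : R[b + i - 1]? = some y) (h0 : b + i ≠ 0) :
    ECond b L R i = decide (y < x) := by
  rw [ECond_eq hx, if_neg h0, hy]

lemma ECond_zero {b i x : ℕ} {L R : List ℕ} (hx : L[i]? = some x) (h0 : b + i = 0) :
    ECond b L R i = true := by
  rw [ECond_eq hx, if_pos h0]

lemma Eop_step (n a c b : ℕ) (L R : List ℕ)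
    (hb : b < a)
    (hlenL : L.length + b = c + a) (hlenR : R.length = c + b)
    (hcL : L.Pairwise (· < ·)) (hcR : R.Pairwise (· < ·))
    (hssd : ∀ i x y, L[i]? = some x → R[b + i]? = some y → x ≤ y)
    (hrL : ∀ x ∈ L, n ≤ x ∧ x < 2 * n) (hrR : ∀ x ∈ R, n ≤ x ∧ x < 2 * n)
    (hw : b = 0 ∨ ∃ i x y, L[i]? = some x ∧ R[b + i - 1]? = some y ∧ y < x) :
    ∃ L' R', KN.Eop (b, L, R) = some (b + 1, L', R') ∧
      L'.length + (b + 1) = c + a ∧ R'.length = c + (b + 1) ∧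
      L'.Pairwise (· < ·) ∧ R'.Pairwise (· < ·) ∧
      (∀ i x y, L'[i]? = some x → R'[(b + 1) + i]? = some y → x ≤ y) ∧
      (∀ x ∈ L', n ≤ x ∧ x < 2 * n) ∧ (∀ x ∈ R', n ≤ x ∧ x < 2 * n) ∧
      ((b + 1) = a ∨ ∃ i x y, L'[i]? = some x ∧ R'[(b + 1) + i - 1]? = some y ∧ y < x) := by
  have hL0 : 0 < L.length := by omega
  have hex : ∃ i ∈ (List.range (R.length - b + 1)).reverse, ECond b L R i = true := by
    rcases hw with rfl | ⟨i, x, y, h1, h2, h3⟩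
    · exact ⟨0, by simp, ECond_zero (List.getElem?_eq_getElem hL0) rfl⟩
    · refine ⟨i, ?_, ?_⟩
      · have := lt_len h2
        simp only [List.mem_reverse, List.mem_range]
        omega
      · by_cases h0 : b + i = 0
        · exact ECond_zero h1 h0
        · rw [ECond_ss h1 h2 h0]
          simpa using h3
  obtain ⟨i₀, hfind⟩ : ∃ i₀,
      ((List.range (R.length - b + 1)).reverse).find? (fun i => ECond b L R i) = some i₀ := by
    cases hF : ((List.range (R.length - b + 1)).reverse).find? (fun i => ECond b L R i) with
    | none =>
        exfalso
        rw [List.find?_eq_none] at hF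
        obtain ⟨i, hm, hc⟩ := hex
        exact absurd hc (by simpa using hF i hm)
    | some i₀ => exact ⟨i₀, rfl⟩
  obtain ⟨hi₀m, hEC, hmax⟩ := find?_range_reverse hfind
  have hi₀c : i₀ ≤ c := by omega
  obtain ⟨x, hx⟩ : ∃ x, L[i₀]? = some x := by
    refine ⟨L[i₀]'(by omega), List.getElem?_eq_getElem (by omega)⟩
  have hi₀len : i₀ < L.length := by omega
  have hlow : b + i₀ ≠ 0 → ∃ y, R[b + i₀ - 1]? = some y ∧ y < x := by
    intro h0
    have hlt : b + i₀ - 1 < R.length := by omega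
    rw [ECond_ss hx (List.getElem?_eq_getElem hlt) h0] at hEC
    exact ⟨R[b + i₀ - 1], List.getElem?_eq_getElem hlt, of_decide_eq_true hEC⟩
  have hmax' : ∀ j y', i₀ < j → j ≤ c → L[j]? = some y' →
      ∃ z, R[b + j - 1]? = some z ∧ y' ≤ z := by
    intro j y' h1 h2 hj
    have hEf := hmax j h1 (by omega)
    have hlt : b + j - 1 < R.length := by omega
    rw [ECond_ss hj (List.getElem?_eq_getElem hlt) (by omega)] at hEf
    refine ⟨R[b + j - 1], List.getElem?_eq_getElem hlt, ?_⟩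
    have := of_decide_eq_false hEf
    omega
  set q := b + i₀ with hqdef
  have hqR : q ≤ R.length := by omega
  set L' := L.eraseIdx i₀ with hL'def
  set R' := R.insertIdx q x with hR'def
  have hEop : KN.Eop (b, L, R) = some (b + 1, L', R') := by
    have hne : ¬ (L.length + b ≤ R.length) := by omega
    show (if L.length + b ≤ R.length then none
      else match ((List.range (R.length - b + 1)).reverse).find? (fun i => ECond b L R i) with
      | none => none
      | some i =>
          match L[i]? with
          | some x => some (b + 1, L.eraseIdx i, R.insertIdx (b + i) x)
          | none => none) = some (b + 1, L', R')
    rw [if_neg hne, hfind]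
    show (match L[i₀]? with
      | some x => some (b + 1, L.eraseIdx i₀, R.insertIdx (b + i₀) x)
      | none => none) = some (b + 1, L', R')
    rw [hx]
  have hR'get : ∀ k, R'[k]? = if k < q then R[k]? else if k = q then some x else R[k-1]? :=
    fun k => getElem?_insertIdx' R x q k hqR
  have hR'v : ∀ k v, R'[k]? = some v →
      (k < q ∧ R[k]? = some v) ∨ (k = q ∧ v = x) ∨ (q < k ∧ R[k-1]? = some v) := by
    intro k v hkv
    rw [hR'get k] at hkv
    split_ifs at hkv with h1 h2
    · exact Or.inl ⟨h1, hkv⟩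
    · exact Or.inr (Or.inl ⟨h2, (Option.some.inj hkv).symm⟩)
    · exact Or.inr (Or.inr ⟨by omega, hkv⟩)
  have hL'get : ∀ i, L'[i]? = if i < i₀ then L[i]? else L[i+1]? := by
    intro i
    rw [hL'def, List.getElem?_eraseIdx]
  have hxq : ∀ z, R[q]? = some z → x < z := by
    intro z hz
    have hqlt : q < R.length := lt_len hz
    have hi₀c' : i₀ < c := by omega
    have hL1 : i₀ + 1 < L.length := by omega
    obtain ⟨z', hz', hle⟩ := hmax' (i₀ + 1) (L[i₀ + 1]) (by omega) (by omega)
      (List.getElem?_eq_getElem hL1)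
    rw [show b + (i₀ + 1) - 1 = q from by omega] at hz'
    have hzz : z' = z := by rw [hz'] at hz; exact Option.some.inj hz
    have hxlt : x < L[i₀ + 1] := sorted_lt' hcL (show i₀ < i₀ + 1 by omega) hx
      (List.getElem?_eq_getElem hL1)
    omega
  have hR'len : R'.length = c + (b + 1) := by
    rw [hR'def, List.length_insertIdx_of_le_length hqR x]; omega
  have hL'len : L'.length + (b + 1) = c + a := by
    rw [hL'def, List.length_eraseIdx, if_pos hi₀len]; omega
  have hcR' : R'.Pairwise (· < ·) := by
    rw [List.pairwise_iff_getElem]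
    intro i j hi hj hij
    have hvi : R'[i]? = some (R'[i]) := List.getElem?_eq_getElem hi
    have hvj : R'[j]? = some (R'[j]) := List.getElem?_eq_getElem hj
    rcases hR'v i _ hvi with ⟨h1, hRi⟩ | ⟨h1, hRi⟩ | ⟨h1, hRi⟩ <;>
      rcases hR'v j _ hvj with ⟨h2, hRj⟩ | ⟨h2, hRj⟩ | ⟨h2, hRj⟩
    · exact sorted_lt' hcR hij hRi hRj
    · obtain ⟨y, hy, hyx⟩ := hlow (by omega)
      have := sorted_le' hcR (show i ≤ q - 1 by omega) hRi hy
      omega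
    · exact sorted_lt' hcR (by omega) hRi hRj
    · omega
    · omega
    · have hq' : q < R.length := by have := lt_len hRj; omega
      have h3 := hxq _ (List.getElem?_eq_getElem hq')
      have h4 := sorted_le' hcR (show q ≤ j - 1 by omega) (List.getElem?_eq_getElem hq') hRj
      omega
    · omega
    · omega
    · exact sorted_lt' hcR (by omega) hRi hRj
  have hcL' : L'.Pairwise (· < ·) := List.Pairwise.sublist (List.eraseIdx_sublist L i₀) hcL
  have hssd' : ∀ i x' y', L'[i]? = some x' → R'[(b + 1) + i]? = some y' → x' ≤ y' := by
    intro i x' y' hLi hRi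
    rcases hR'v _ _ hRi with ⟨h1, hRv⟩ | ⟨h1, hRv⟩ | ⟨h1, hRv⟩
    · -- b + 1 + i < q, so i + 1 < i₀, so i < i₀
      have hii : i < i₀ := by omega
      rw [hL'get i, if_pos hii] at hLi
      have hbi : b + i < R.length := by omega
      have h2 := hssd i x' (R[b + i]) hLi (List.getElem?_eq_getElem hbi)
      have h3 := sorted_le' hcR (show b + i ≤ b + 1 + i by omega)
        (List.getElem?_eq_getElem hbi) hRv
      omega
    · -- b + 1 + i = q = b + i₀, so i₀ = i + 1
      have hii : i < i₀ := by omega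
      rw [hL'get i, if_pos hii] at hLi
      have := sorted_lt' hcL (show i < i₀ by omega) hLi hx
      omega
    · -- q < b + 1 + i, so i₀ ≤ i
      have hii : ¬ i < i₀ := by omega
      rw [hL'get i, if_neg hii] at hLi
      have hic : i + 1 ≤ c := by
        have := lt_len hRi
        rw [hR'len] at this
        omega
      obtain ⟨z, hz, hle⟩ := hmax' (i + 1) x' (by omega) hic hLi
      rw [show b + (i + 1) - 1 = (b + 1) + i - 1 from by omega] at hz
      rw [show (b + 1) + i - 1 = b + i from by omega] at hz
      rw [show (b + 1) + i - 1 = b + i from by omega] at hRv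
      rw [hz] at hRv
      have := Option.some.inj hRv
      omega
  have hrL' : ∀ x' ∈ L', n ≤ x' ∧ x' < 2 * n := fun x' hx' =>
    hrL x' ((List.eraseIdx_sublist L i₀).mem hx')
  have hrR' : ∀ y' ∈ R', n ≤ y' ∧ y' < 2 * n := by
    intro y' hy'
    rw [hR'def, List.mem_insertIdx hqR] at hy'
    rcases hy' with rfl | hy'
    · exact hrL y' (List.mem_of_getElem? hx)
    · exact hrR y' hy'
  refine ⟨L', R', hEop, hL'len, hR'len, hcL', hcR', hssd', hrL', hrR', ?_⟩
  by_cases hba : b + 1 = a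
  · exact Or.inl hba
  · refine Or.inr ⟨i₀, L[i₀ + 1]'(by omega), x, ?_, ?_, ?_⟩
    · rw [hL'get i₀, if_neg (by omega)]
      exact List.getElem?_eq_getElem (by omega)
    · rw [show (b + 1) + i₀ - 1 = q from by omega, hR'get q, if_neg (by omega), if_pos rfl]
    · exact sorted_lt' hcL (show i₀ < i₀ + 1 by omega) hx
        (List.getElem?_eq_getElem (by omega))

end KNAux
namespace KNAux
open KN List

lemma Eop_iter (n a c : ℕ) : ∀ k b L R, b + k = a →
    L.length + b = c + a → R.length = c + b →
    L.Pairwise (· < ·) → R.Pairwise (· < ·) →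
    (∀ i x y, L[i]? = some x → R[b + i]? = some y → x ≤ y) →
    (∀ x ∈ L, n ≤ x ∧ x < 2 * n) → (∀ x ∈ R, n ≤ x ∧ x < 2 * n) →
    (b = a ∨ b = 0 ∨ ∃ i x y, L[i]? = some x ∧ R[b + i - 1]? = some y ∧ y < x) →
    ∃ LA RA, KN.iterO KN.Eop k (b, L, R) = some (a, LA, RA) ∧
      LA.length = c ∧ RA.length = c + a ∧
      LA.Pairwise (· < ·) ∧ RA.Pairwise (· < ·) ∧
      (∀ i x y, LA[i]? = some x → RA[a + i]? = some y → x ≤ y) ∧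
      (∀ x ∈ LA, n ≤ x ∧ x < 2 * n) ∧ (∀ x ∈ RA, n ≤ x ∧ x < 2 * n) := by
  intro k
  induction k with
  | zero =>
      intro b L R h0 h1 h2 h3 h4 h5 h6 h7 _
      obtain rfl : b = a := by omega
      exact ⟨L, R, rfl, by omega, by omega, h3, h4, h5, h6, h7⟩
  | succ k ih =>
      intro b L R h0 h1 h2 h3 h4 h5 h6 h7 h8
      have hb : b < a := by omega
      have hw : b = 0 ∨ ∃ i x y, L[i]? = some x ∧ R[b + i - 1]? = some y ∧ y < x := by
        rcases h8 with h8 | h8 | h8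
        · omega
        · exact Or.inl h8
        · exact Or.inr h8
      obtain ⟨L', R', hEop, p1, p2, p3, p4, p5, p6, p7, p8⟩ :=
        Eop_step n a c b L R hb h1 h2 h3 h4 h5 h6 h7 hw
      obtain ⟨LA, RA, hit, q⟩ := ih (b + 1) L' R' (by omega) p1 p2 p3 p4 p5 p6 p7
        (p8.elim Or.inl fun h => Or.inr (Or.inr h))
      refine ⟨LA, RA, ?_, q⟩
      show (KN.Eop (b, L, R)).bind (KN.iterO KN.Eop k) = some (a, LA, RA)
      rw [hEop, Option.bind_some]
      exact hit

lemma compBar_mem {n : ℕ} {RA : List ℕ} {j : ℕ} :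
    j ∈ compBar n RA ↔ j < n ∧ (2 * n - 1 - j) ∉ RA := by
  simp [compBar]

lemma compBar_sorted (n : ℕ) (RA : List ℕ) : (compBar n RA).Pairwise (· < ·) :=
  (List.pairwise_lt_range (n := n)).filter _

lemma compBar_length {n : ℕ} {RA : List ℕ} (hnd : RA.Nodup)
    (hr : ∀ x ∈ RA, n ≤ x ∧ x < 2 * n) :
    (compBar n RA).length + RA.length = n := by
  classical
  have key : ((List.range n).filter (fun j => RA.contains (2 * n - 1 - j))).length
      = RA.length := by
    have hnd2 : ((List.range n).filter (fun j => RA.contains (2 * n - 1 - j))).Nodup :=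
      (List.nodup_range (n := n)).filter _
    have hset : ((List.range n).filter (fun j => RA.contains (2 * n - 1 - j))).toFinset
        = RA.toFinset.image (fun y => 2 * n - 1 - y) := by
      ext j
      simp only [List.mem_toFinset, List.mem_filter, List.mem_range, Finset.mem_image,
        List.elem_eq_mem, decide_eq_true_eq]
      constructor
      · rintro ⟨hj, hmem⟩
        exact ⟨2 * n - 1 - j, hmem, by omega⟩
      · rintro ⟨y, hy, rfl⟩
        obtain ⟨hy1, hy2⟩ := hr y hy
        constructor
        · omega
        · rw [show 2 * n - 1 - (2 * n - 1 - y) = y from by omega]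
          exact hy
    have h1 := List.toFinset_card_of_nodup hnd2
    have h2 := List.toFinset_card_of_nodup hnd
    rw [hset, Finset.card_image_of_injOn (fun y hy y' hy' hyy => by
      simp only [Finset.coe_insert, Set.mem_setOf_eq, List.coe_toFinset, Set.mem_setOf_eq] at hy hy'
      have := hr y (by simpa using hy)
      have := hr y' (by simpa using hy')
      omega), h2] at h1
    omega
  have hsplit : ((List.range n).filter (fun j => ! RA.contains (2 * n - 1 - j))).length
      + ((List.range n).filter (fun j => RA.contains (2 * n - 1 - j))).length
      = (List.range n).length := by
    rw [← List.countP_eq_length_filter, ← List.countP_eq_length_filter]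
    have h1 := List.length_eq_countP_add_countP
      (fun j => RA.contains (2 * n - 1 - j)) (l := List.range n)
    have hfun : (fun a => decide ¬ (RA.contains (2 * n - 1 - a)) = true)
        = (fun j => ! RA.contains (2 * n - 1 - j)) := by
      funext a; cases h : RA.contains (2 * n - 1 - a) <;> simp [h]
    rw [hfun] at h1
    omega
  rw [List.length_range] at hsplit
  unfold compBar
  omega

end KNAux
theorem tilde_is_KN_column (n a c : ℕ) (hn : 2 ≤ n) (ha : a < n) (L R : List ℕ)
    (hL : L.length = c + a) (hR : R.length = c)
    (hssd : PairSSD 0 L R)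
    (hrangeL : ∀ x ∈ L, n ≤ x ∧ x < 2 * n) (hrangeR : ∀ x ∈ R, n ≤ x ∧ x < 2 * n) :
    (tildeMap n a L R).length = n - a ∧
    (tildeMap n a L R).Chain' (· < ·) ∧
    (∀ x ∈ tildeMap n a L R, x < 2 * n) ∧
    KN1 n (n - a) (tildeMap n a L R) := by
  classical
  obtain ⟨hcL, hcR, hssd0⟩ := hssd
  have hpL : L.Pairwise (· < ·) := List.isChain_iff_pairwise.mp hcL
  have hpR : R.Pairwise (· < ·) := List.isChain_iff_pairwise.mp hcR
  obtain ⟨LA, RA, hiter, hLAlen, hRAlen, hpLA, hpRA, hssdA, hrLA, hrRA⟩ :=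
    KNAux.Eop_iter n a c a 0 L R (by omega) (by omega) (by omega) hpL hpR
      hssd0 hrangeL hrangeR (Or.inr (Or.inl rfl))
  have htm : tildeMap n a L R = compBar n RA ++ LA := by
    unfold tildeMap
    rw [hiter]
  set C := compBar n RA with hC
  have hRAnd : RA.Nodup := hpRA.imp (fun h => Nat.ne_of_lt h)
  have hCnd : C.Nodup := (KNAux.compBar_sorted n RA).imp (fun h => Nat.ne_of_lt h)
  have hClen : C.length + RA.length = n := KNAux.compBar_length hRAnd hrRA
  have hcan : c + a ≤ n := by
    have := KNAux.nodup_Ico_length hRAnd hrRA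
    omega
  have hTlen : (C ++ LA).length = n - a := by
    rw [List.length_append]
    omega
  have hpT : (C ++ LA).Pairwise (· < ·) := by
    rw [List.pairwise_append]
    refine ⟨KNAux.compBar_sorted n RA, hpLA, ?_⟩
    intro x hx y hy
    have hx' := (KNAux.compBar_mem.mp hx).1
    have hy' := (hrLA y hy).1
    omega
  rw [htm]
  refine ⟨hTlen, List.isChain_iff_pairwise.mpr hpT, ?_, ?_⟩
  · intro x hx
    rw [List.mem_append] at hx
    rcases hx with hx | hx
    · have := (KNAux.compBar_mem.mp hx).1
      omega
    · exact (hrLA x hx).2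
  -- the KN one-column condition
  intro c' i₁ i₂ hc1 hcn h₁ h₂ hilt
  set len := (C ++ LA).length with hlendef
  have hlen2 : len = C.length + LA.length := List.length_append
  have hb1 : 1 ≤ i₁ ∧ i₁ ≤ len := by
    by_contra hcon
    rw [KN.getB, if_neg hcon] at h₁
    simp at h₁
  rw [KN.getB, if_pos hb1] at h₁
  have hb2 : 1 ≤ i₂ ∧ i₂ ≤ len := by
    by_contra hcon
    rw [KN.getB, if_neg hcon] at h₂
    simp at h₂
  rw [KN.getB, if_pos hb2] at h₂
  have hj₁ : ¬ (len - i₁ < C.length) := by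
    intro hcon
    rw [List.getElem?_append, if_pos hcon] at h₁
    have := (KNAux.compBar_mem.mp (List.mem_of_getElem? h₁)).1
    omega
  rw [List.getElem?_append, if_neg hj₁] at h₁
  have hp1 : len - i₁ - C.length < LA.length := KNAux.lt_len h₁
  set p := len - i₁ - C.length with hpdef
  have hj₂ : len - i₂ < C.length := by
    by_contra hcon
    rw [List.getElem?_append, if_neg hcon] at h₂
    have := (hrLA _ (List.mem_of_getElem? h₂)).1
    omega
  rw [List.getElem?_append, if_pos hj₂] at h₂
  -- first count: c - p ≤ #{z ∈ RA, 2n - c' ≤ z}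
  have hap : a + p < RA.length := by omega
  have hy := hssdA p _ _ h₁ (List.getElem?_eq_getElem hap)
  have hcount1 : RA.length - (a + p) ≤ RA.countP (fun z => decide (2 * n - c' ≤ z)) :=
    KNAux.count_ge hpRA (List.getElem?_eq_getElem hap) hy
  -- second count
  have htake : ∀ e ∈ C.take (len - i₂ + 1), e ≤ c' - 1 ∧ e < n ∧ (2 * n - 1 - e) ∉ RA := by
    intro e he
    have heC : e ∈ C := (List.take_sublist _ _).mem he
    obtain ⟨j, hj, hje⟩ := List.getElem_of_mem he
    have hjle : j ≤ len - i₂ := by rw [List.length_take] at hj; omega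
    rw [List.getElem_take] at hje
    have h2v : C[len - i₂]'hj₂ = c' - 1 := by
      rw [List.getElem?_eq_getElem hj₂] at h₂
      exact Option.some.inj h₂
    have hle : e ≤ c' - 1 := by
      rw [← hje, ← h2v]
      exact KNAux.sorted_le (KNAux.compBar_sorted n RA) hjle hj₂
    have hmem := KNAux.compBar_mem.mp heC
    exact ⟨hle, hmem.1, hmem.2⟩
  set D := ((C.take (len - i₂ + 1)).map (fun e => 2 * n - 1 - e)) with hD
  have hDlen : D.length = len - i₂ + 1 := by
    rw [hD, List.length_map, List.length_take]
    omega
  have hDnodup : D.Nodup := by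
    rw [hD]
    refine List.Nodup.map_on ?_ (List.Nodup.sublist (List.take_sublist _ _) hCnd)
    intro x hx y hy hxy
    have h1 := (htake x hx).2.1
    have h2 := (htake y hy).2.1
    omega
  set G := RA.filter (fun z => decide (2 * n - c' ≤ z)) with hG
  have hGlen : G.length = RA.countP (fun z => decide (2 * n - c' ≤ z)) :=
    List.countP_eq_length_filter.symm
  have hDG : (D ++ G).Nodup := by
    refine List.Nodup.append hDnodup (hRAnd.filter _) ?_
    intro t htD htG
    obtain ⟨e, he, rfl⟩ := List.mem_map.mp htD
    exact (htake e he).2.2 (List.mem_of_mem_filter htG)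
  have hbound : (D ++ G).length ≤ 2 * n - (2 * n - c') := by
    refine KNAux.nodup_Ico_length hDG ?_
    intro t ht
    rw [List.mem_append] at ht
    rcases ht with ht | ht
    · obtain ⟨e, he, rfl⟩ := List.mem_map.mp ht
      have := htake e he
      omega
    · have h1 := List.mem_of_mem_filter ht
      have h2 : 2 * n - c' ≤ t := by simpa using List.of_mem_filter ht
      have h3 := hrRA t h1
      omega
  rw [List.length_append, hDlen, hGlen] at hbound
  omega
end
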